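/- arXiv:2601.13519 — 2 statements merged into one kernel-verified Lean document; each statement's English description precedes it below -/
import Mathlib

section
/- (AdaGrad-Norm G* regret) Let ℓ_1,...,ℓ_T : R^n → R be convex and L-smooth, X closed convex with diameter ≤ D. Suppose the iterates x^t ∈ X satisfy the linearized regret bound Σ_{t=1}^T ⟨∇ℓ_t(x^t), x^t − x⟩ ≤ √2·D·sqrt(Σ_{t=1}^T ‖∇ℓ_t(x^t)‖²) for all x ∈ X. Then Σ_{t=1}^T [ℓ_t(x^t) − ℓ_t(x)] ≤ √2·D·sqrt(Σ_{t=1}^T ‖∇ℓ_t(x)‖²) + L·D² for all x ∈ X. -/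
open Finset InnerProductSpace

variable {n : ℕ}

lemma line_hasDerivAt {f : EuclideanSpace ℝ (Fin n) → ℝ} {G : EuclideanSpace ℝ (Fin n) → EuclideanSpace ℝ (Fin n)}
    (hG : ∀ z, HasGradientAt f (G z) z) (a v : EuclideanSpace ℝ (Fin n)) (t : ℝ) :
    HasDerivAt (fun s : ℝ => f (a + s • v)) ⟪G (a + t • v), v⟫_ℝ t := by
  have h1 : HasDerivAt (fun s : ℝ => a + s • v) v t := by
    simpa using ((hasDerivAt_id t).smul_const v).const_add a
  have h2 := (hasGradientAt_iff_hasFDerivAt.1 (hG (a + t • v)))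
  have := h2.comp_hasDerivAt t h1
  simpa [InnerProductSpace.toDual_apply_apply, Function.comp_def] using this

lemma first_order {f : EuclideanSpace ℝ (Fin n) → ℝ} {G : EuclideanSpace ℝ (Fin n) → EuclideanSpace ℝ (Fin n)}
    (hc : ConvexOn ℝ Set.univ f) (hG : ∀ z, HasGradientAt f (G z) z)
    (x y : EuclideanSpace ℝ (Fin n)) :
    f x + ⟪G x, y - x⟫_ℝ ≤ f y := by
  set v := y - x with hv
  have hline := line_hasDerivAt hG x v
  have hg : ConvexOn ℝ Set.univ (fun s : ℝ => f (x + s • v)) := by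
    have := hc.comp_affineMap (AffineMap.lineMap x y)
    have heq : (fun s : ℝ => f (x + s • v)) = f ∘ (AffineMap.lineMap x y) := by
      funext s
      simp [AffineMap.lineMap_apply, hv, add_comm]
    rw [heq]
    simpa using this
  have hs := hg.le_slope_of_hasDerivAt (Set.mem_univ (0:ℝ)) (Set.mem_univ (1:ℝ)) one_pos (hline 0)
  rw [slope_def_field] at hs
  have e0 : x + (0:ℝ) • v = x := by simp
  have e1 : x + (1:ℝ) • v = y := by simp [hv]
  rw [e0, e1] at hs
  rw [show (1:ℝ)-0 = 1 by norm_num, div_one] at hs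
  linarith

lemma descent {f : EuclideanSpace ℝ (Fin n) → ℝ} {G : EuclideanSpace ℝ (Fin n) → EuclideanSpace ℝ (Fin n)}
    {L : ℝ} (hL : 0 < L)
    (hG : ∀ z, HasGradientAt f (G z) z)
    (hLip : ∀ a b, ‖G a - G b‖ ≤ L * ‖a - b‖)
    (x y : EuclideanSpace ℝ (Fin n)) :
    f y ≤ f x + ⟪G x, y - x⟫_ℝ + L / 2 * ‖y - x‖ ^ 2 := by
  set v := y - x with hv
  have hline := line_hasDerivAt hG x v
  set φ : ℝ → ℝ := fun t => f (x + t • v) - f x - t * ⟪G x, v⟫_ℝ - L / 2 * ‖v‖ ^ 2 * t ^ 2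
    with hφ
  have hφ' : ∀ t : ℝ, HasDerivAt φ
      (⟪G (x + t • v), v⟫_ℝ - ⟪G x, v⟫_ℝ - L * ‖v‖ ^ 2 * t) t := by
    intro t
    have h1 := ((hline t).sub_const (f x)).sub (hasDerivAt_mul_const (⟪G x, v⟫_ℝ))
    have h2 := (hasDerivAt_pow 2 t).const_mul (L / 2 * ‖v‖ ^ 2)
    have := h1.sub h2
    convert this using 1
    · rfl
    · rfl
    · rfl
    · norm_num <;> ring
  have hderiv_nonpos : ∀ t ∈ Set.Ioo (0:ℝ) 1, deriv φ t ≤ 0 := by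
    intro t ht
    rw [(hφ' t).deriv]
    have hcs : ⟪G (x + t • v) - G x, v⟫_ℝ ≤ ‖G (x + t • v) - G x‖ * ‖v‖ :=
      real_inner_le_norm _ _
    have hlip : ‖G (x + t • v) - G x‖ ≤ L * (t * ‖v‖) := by
      have := hLip (x + t • v) x
      have he : x + t • v - x = t • v := by abel
      rw [he, norm_smul] at this
      simpa [abs_of_pos ht.1] using this
    have hinner : ⟪G (x + t • v) - G x, v⟫_ℝ = ⟪G (x + t • v), v⟫_ℝ - ⟪G x, v⟫_ℝ :=
      inner_sub_left _ _ _
    nlinarith [norm_nonneg v, norm_nonneg (G (x + t • v) - G x), ht.1.le]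
  have hanti : AntitoneOn φ (Set.Icc (0:ℝ) 1) := by
    apply antitoneOn_of_deriv_nonpos (convex_Icc 0 1)
    · exact (Continuous.continuousOn (by
        have : Differentiable ℝ φ := fun t => (hφ' t).differentiableAt
        exact this.continuous))
    · intro t ht
      exact (hφ' t).differentiableAt.differentiableWithinAt
    · intro t ht
      rw [interior_Icc] at ht
      exact hderiv_nonpos t ht
  have h01 : φ 1 ≤ φ 0 := hanti (by norm_num) (by norm_num) zero_le_one
  have h0 : φ 0 = 0 := by simp [hφ]
  have h1 : φ 1 = f y - f x - ⟪G x, v⟫_ℝ - L / 2 * ‖v‖ ^ 2 := by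
    have e1 : x + (1:ℝ) • v = y := by simp [hv]
    have e1' : x + v = y := by simpa using e1
    simp [hφ, e1']
  rw [h0, h1] at h01
  linarith

lemma coco {f : EuclideanSpace ℝ (Fin n) → ℝ} {G : EuclideanSpace ℝ (Fin n) → EuclideanSpace ℝ (Fin n)}
    {L : ℝ} (hL : 0 < L) (hc : ConvexOn ℝ Set.univ f)
    (hG : ∀ z, HasGradientAt f (G z) z)
    (hLip : ∀ a b, ‖G a - G b‖ ≤ L * ‖a - b‖)
    (x y : EuclideanSpace ℝ (Fin n)) :
    f x + ⟪G x, y - x⟫_ℝ + 1 / (2 * L) * ‖G y - G x‖ ^ 2 ≤ f y := by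
  set φ : EuclideanSpace ℝ (Fin n) → ℝ := fun z => f z - ⟪G x, z⟫_ℝ with hφ
  set Gφ : EuclideanSpace ℝ (Fin n) → EuclideanSpace ℝ (Fin n) := fun z => G z - G x with hGφ
  have hGφ' : ∀ z, HasGradientAt φ (Gφ z) z := by
    intro z
    rw [hasGradientAt_iff_hasFDerivAt]
    have h1 := hasGradientAt_iff_hasFDerivAt.1 (hG z)
    have h2 : HasFDerivAt (fun w : EuclideanSpace ℝ (Fin n) => ⟪G x, w⟫_ℝ)
        (InnerProductSpace.toDual ℝ (EuclideanSpace ℝ (Fin n)) (G x) :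
          EuclideanSpace ℝ (Fin n) →L[ℝ] ℝ) z := by
      have := (InnerProductSpace.toDual ℝ (EuclideanSpace ℝ (Fin n)) (G x) :
          EuclideanSpace ℝ (Fin n) →L[ℝ] ℝ).hasFDerivAt (x := z)
      convert this using 2
      simp [InnerProductSpace.toDual_apply_apply]
    have := h1.sub h2
    simpa [hφ, hGφ, map_sub, Pi.sub_def] using this
  have hLipφ : ∀ a b, ‖Gφ a - Gφ b‖ ≤ L * ‖a - b‖ := by
    intro a b
    have : Gφ a - Gφ b = G a - G b := by simp only [hGφ]; abel
    rw [this]; exact hLip a b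
  set w := y - (1 / L) • Gφ y with hw
  -- φ x ≤ φ w by first-order condition of f
  have hmin : φ x ≤ φ w := by
    have := first_order hc hG x w
    have hir : ⟪G x, w - x⟫_ℝ = ⟪G x, w⟫_ℝ - ⟪G x, x⟫_ℝ := inner_sub_right _ _ _
    simp only [hφ]
    linarith [this, hir.le, hir.ge]
  -- descent for φ from y to w
  have hdesc := descent hL hGφ' hLipφ y w
  have hwy : w - y = -((1 / L) • Gφ y) := by rw [hw]; abel
  have hinner : ⟪Gφ y, w - y⟫_ℝ = -(1 / L) * ‖Gφ y‖ ^ 2 := by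
    rw [hwy, inner_neg_right, real_inner_smul_right, real_inner_self_eq_norm_sq]
    ring
  have hnorm : ‖w - y‖ ^ 2 = (1 / L) ^ 2 * ‖Gφ y‖ ^ 2 := by
    rw [hwy, norm_neg, norm_smul]
    rw [Real.norm_eq_abs, abs_of_pos (by positivity)]
    ring
  rw [hinner, hnorm] at hdesc
  -- combine: φ x ≤ φ y - 1/(2L) ‖Gφ y‖²
  have hkey : φ x ≤ φ y - 1 / (2 * L) * ‖Gφ y‖ ^ 2 := by
    have hL' : L ≠ 0 := ne_of_gt hL
    have : φ y + -(1 / L) * ‖Gφ y‖ ^ 2 + L / 2 * ((1 / L) ^ 2 * ‖Gφ y‖ ^ 2)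
        = φ y - 1 / (2 * L) * ‖Gφ y‖ ^ 2 := by field_simp; ring
    exact hmin.trans (hdesc.trans_eq this)
  -- unfold φ
  have hiry : ⟪G x, y - x⟫_ℝ = ⟪G x, y⟫_ℝ - ⟪G x, x⟫_ℝ := inner_sub_right _ _ _
  simp only [hφ, hGφ] at hkey
  linarith [hkey, hiry.le, hiry.ge]

theorem stmt11 (n T : ℕ) (L D : ℝ) (hL : 0 < L) (hD : 0 < D)
    (ℓ : ℕ → EuclideanSpace ℝ (Fin n) → ℝ)
    (hconv : ∀ t, ConvexOn ℝ Set.univ (ℓ t))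
    (hdiff : ∀ t, Differentiable ℝ (ℓ t))
    (hsmooth : ∀ t, ∀ x y, ‖gradient (ℓ t) x - gradient (ℓ t) y‖ ≤ L * ‖x - y‖)
    (X : Set (EuclideanSpace ℝ (Fin n))) (hXconv : Convex ℝ X) (hXclosed : IsClosed X)
    (hXdiam : Metric.diam X ≤ D)
    (x : ℕ → EuclideanSpace ℝ (Fin n)) (hxX : ∀ t, x t ∈ X)
    (hlin : ∀ y ∈ X,
      ∑ t ∈ Finset.range T, ⟪gradient (ℓ t) (x t), x t - y⟫_ℝ ≤
        Real.sqrt 2 * D * Real.sqrt (∑ t ∈ Finset.range T, ‖gradient (ℓ t) (x t)‖ ^ 2)) :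
    ∀ y ∈ X,
      ∑ t ∈ Finset.range T, (ℓ t (x t) - ℓ t y) ≤
        Real.sqrt 2 * D * Real.sqrt (∑ t ∈ Finset.range T, ‖gradient (ℓ t) y‖ ^ 2) +
          L * D ^ 2 := by
  intro y hy
  -- cocoercivity per round
  have key : ∀ t, ℓ t (x t) - ℓ t y ≤ ⟪gradient (ℓ t) (x t), x t - y⟫_ℝ -
      1 / (2 * L) * ‖gradient (ℓ t) y - gradient (ℓ t) (x t)‖ ^ 2 := by
    intro t
    have hG : ∀ z, HasGradientAt (ℓ t) (gradient (ℓ t) z) z :=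
      fun z => ((hdiff t) z).hasGradientAt
    have hcc := coco hL (hconv t) hG (hsmooth t) (x t) y
    have hflip : ⟪gradient (ℓ t) (x t), x t - y⟫_ℝ
        = -⟪gradient (ℓ t) (x t), y - x t⟫_ℝ := by
      rw [← inner_neg_right, neg_sub]
    rw [hflip]
    linarith
  set A := ∑ t ∈ Finset.range T, ‖gradient (ℓ t) (x t)‖ ^ 2 with hA
  set B := ∑ t ∈ Finset.range T, ‖gradient (ℓ t) y‖ ^ 2 with hB
  set Dq := ∑ t ∈ Finset.range T, ‖gradient (ℓ t) y - gradient (ℓ t) (x t)‖ ^ 2 with hDq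
  have hA0 : 0 ≤ A := Finset.sum_nonneg fun t _ => sq_nonneg _
  have hB0 : 0 ≤ B := Finset.sum_nonneg fun t _ => sq_nonneg _
  have hDq0 : 0 ≤ Dq := Finset.sum_nonneg fun t _ => sq_nonneg _
  have hsum : ∑ t ∈ Finset.range T, (ℓ t (x t) - ℓ t y) ≤
      (∑ t ∈ Finset.range T, ⟪gradient (ℓ t) (x t), x t - y⟫_ℝ) - 1 / (2 * L) * Dq := by
    rw [hDq, Finset.mul_sum, ← Finset.sum_sub_distrib]
    exact Finset.sum_le_sum fun t _ => key t
  have hlin' := hlin y hy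
  -- Minkowski-type: √A ≤ √B + √Dq
  have hmink : Real.sqrt A ≤ Real.sqrt B + Real.sqrt Dq := by
    have hAle : A ≤ (Real.sqrt B + Real.sqrt Dq) ^ 2 := by
      have hcs : ∑ t ∈ Finset.range T,
          ‖gradient (ℓ t) y‖ * ‖gradient (ℓ t) y - gradient (ℓ t) (x t)‖ ≤
          Real.sqrt B * Real.sqrt Dq := by
        have := Real.sum_mul_le_sqrt_mul_sqrt (Finset.range T)
          (fun t => ‖gradient (ℓ t) y‖)
          (fun t => ‖gradient (ℓ t) y - gradient (ℓ t) (x t)‖)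
        simpa [hB, hDq] using this
      have hexp : (Real.sqrt B + Real.sqrt Dq) ^ 2 =
          B + 2 * (Real.sqrt B * Real.sqrt Dq) + Dq := by
        rw [add_sq, Real.sq_sqrt hB0, Real.sq_sqrt hDq0]; ring
      rw [hexp]
      have htri : ∀ t ∈ Finset.range T, ‖gradient (ℓ t) (x t)‖ ^ 2 ≤
          ‖gradient (ℓ t) y‖ ^ 2 +
          2 * (‖gradient (ℓ t) y‖ * ‖gradient (ℓ t) y - gradient (ℓ t) (x t)‖) +
          ‖gradient (ℓ t) y - gradient (ℓ t) (x t)‖ ^ 2 := by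
        intro t _
        have h1 : ‖gradient (ℓ t) (x t)‖ ≤
            ‖gradient (ℓ t) y‖ + ‖gradient (ℓ t) y - gradient (ℓ t) (x t)‖ := by
          simpa [sub_sub_cancel] using
            norm_sub_le (gradient (ℓ t) y) (gradient (ℓ t) y - gradient (ℓ t) (x t))
        nlinarith [norm_nonneg (gradient (ℓ t) (x t)),
          norm_nonneg (gradient (ℓ t) y),
          norm_nonneg (gradient (ℓ t) y - gradient (ℓ t) (x t))]
      calc A ≤ ∑ t ∈ Finset.range T, (‖gradient (ℓ t) y‖ ^ 2 +
          2 * (‖gradient (ℓ t) y‖ * ‖gradient (ℓ t) y - gradient (ℓ t) (x t)‖) +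
          ‖gradient (ℓ t) y - gradient (ℓ t) (x t)‖ ^ 2) := Finset.sum_le_sum htri
        _ = B + 2 * (∑ t ∈ Finset.range T,
            ‖gradient (ℓ t) y‖ * ‖gradient (ℓ t) y - gradient (ℓ t) (x t)‖) + Dq := by
            rw [hB, hDq, Finset.sum_add_distrib, Finset.sum_add_distrib, Finset.mul_sum]
        _ ≤ B + 2 * (Real.sqrt B * Real.sqrt Dq) + Dq := by linarith
    calc Real.sqrt A ≤ Real.sqrt ((Real.sqrt B + Real.sqrt Dq) ^ 2) := Real.sqrt_le_sqrt hAle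
      _ = Real.sqrt B + Real.sqrt Dq := Real.sqrt_sq (by positivity)
  -- AM-GM: √2 D √Dq − 1/(2L) Dq ≤ L D²
  have hamgm : Real.sqrt 2 * D * Real.sqrt Dq - 1 / (2 * L) * Dq ≤ L * D ^ 2 := by
    set s := Real.sqrt Dq with hs
    have hs0 : 0 ≤ s := Real.sqrt_nonneg _
    have hs2 : s ^ 2 = Dq := Real.sq_sqrt hDq0
    have h2 : Real.sqrt 2 ^ 2 = 2 := Real.sq_sqrt (by norm_num)
    have hsq := sq_nonneg (s - Real.sqrt 2 * L * D)
    have hLpos : 0 < 2 * L := by linarith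
    have hc : (Real.sqrt 2 * L * D) ^ 2 = 2 * L ^ 2 * D ^ 2 := by
      rw [mul_pow, mul_pow, h2]
    have h : 2 * L * (Real.sqrt 2 * D * s) ≤ s ^ 2 + 2 * L ^ 2 * D ^ 2 := by
      nlinarith [hsq, hc]
    rw [← hs2]
    rw [show (1 / (2 * L) * s ^ 2 : ℝ) = s ^ 2 / (2 * L) by ring,
      sub_le_iff_le_add, ← sub_le_iff_le_add', le_div_iff₀ hLpos]
    nlinarith [h]
  calc ∑ t ∈ Finset.range T, (ℓ t (x t) - ℓ t y)
      ≤ (∑ t ∈ Finset.range T, ⟪gradient (ℓ t) (x t), x t - y⟫_ℝ) - 1 / (2 * L) * Dq := hsum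
    _ ≤ Real.sqrt 2 * D * Real.sqrt A - 1 / (2 * L) * Dq := by linarith
    _ ≤ Real.sqrt 2 * D * (Real.sqrt B + Real.sqrt Dq) - 1 / (2 * L) * Dq := by
        have : 0 ≤ Real.sqrt 2 * D := by positivity
        nlinarith [hmink]
    _ = Real.sqrt 2 * D * Real.sqrt B + (Real.sqrt 2 * D * Real.sqrt Dq - 1 / (2 * L) * Dq) := by
        ring
    _ ≤ Real.sqrt 2 * D * Real.sqrt B + L * D ^ 2 := by linarith
end

section
/- (Generic conversion of adaptive linear regret) Let ℓ_1,...,ℓ_T be convex and L-smooth on R^n, and suppose the iterates x^t satisfy, for some constant C > 0 and all x in a set X, Σ_{t=1}^T ⟨∇ℓ_t(x^t), x^t − x⟩ ≤ C·sqrt(Σ_{t=1}^T ‖∇ℓ_t(x^t)‖²). Then Σ_{t=1}^T [ℓ_t(x^t) − ℓ_t(x)] ≤ C·sqrt(Σ_{t=1}^T ‖∇ℓ_t(x)‖²) + (L·C²)/2 for all x ∈ X. -/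
open Finset InnerProductSpace Set

section Aux

variable {F : Type*} [NormedAddCommGroup F] [InnerProductSpace ℝ F] [CompleteSpace F]

lemma line_hasDerivAt_s12 (f : F → ℝ) (hd : Differentiable ℝ f) (a b : F) (s : ℝ) :
    HasDerivAt (fun s : ℝ => f (a + s • (b - a)))
      ⟪gradient f (a + s • (b - a)), b - a⟫_ℝ s := by
  have hline : HasDerivAt (fun s : ℝ => a + s • (b - a)) (b - a) s := by
    simpa using (((hasDerivAt_id s).smul_const (b - a)).const_add a)
  have hf := (hd (a + s • (b - a))).hasGradientAt
  have := (hf.hasFDerivAt).comp_hasDerivAt s hline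
  simpa [InnerProductSpace.toDual_apply_apply, -toDual_gradient, -inner_gradient_left, Function.comp_def] using this

lemma convex_grad_ineq (f : F → ℝ) (hc : ConvexOn ℝ Set.univ f)
    (hd : Differentiable ℝ f) (a b : F) :
    f a + ⟪gradient f a, b - a⟫_ℝ ≤ f b := by
  set g : ℝ → ℝ := fun s => f (a + s • (b - a)) with hg
  have hg0 : HasDerivAt g ⟪gradient f a, b - a⟫_ℝ 0 := by
    simpa using line_hasDerivAt_s12 f hd a b 0
  rw [hasDerivAt_iff_tendsto_slope] at hg0
  have hle : ⟪gradient f a, b - a⟫_ℝ ≤ f b - f a := by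
    have h1 : Filter.Tendsto (slope g 0) (nhdsWithin (0:ℝ) (Set.Ioi 0))
        (nhds ⟪gradient f a, b - a⟫_ℝ) :=
      hg0.mono_left (nhdsWithin_mono _ (fun s hs => ne_of_gt hs))
    refine le_of_tendsto h1 ?_
    filter_upwards [Ioc_mem_nhdsGT_of_mem (by norm_num : (0:ℝ) ∈ Set.Ico (0:ℝ) 1)] with s hs
    obtain ⟨hs0, hs1⟩ := hs
    have hcvx := hc.2 (mem_univ a) (mem_univ b) (by linarith : (0:ℝ) ≤ 1 - s)
      (le_of_lt hs0) (by ring)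
    have hpt : (1 - s) • a + s • b = a + s • (b - a) := by
      simp [smul_sub, sub_smul]; abel
    rw [hpt] at hcvx
    have hg0' : g 0 = f a := by simp [hg]
    have : slope g 0 s = (g s - f a) / s := by
      simp [slope, hg0']; ring
    rw [this]
    rw [div_le_iff₀ hs0]
    have : g s ≤ (1 - s) * f a + s * f b := by simpa [smul_eq_mul] using hcvx
    nlinarith
  linarith

lemma descent_lemma (f : F → ℝ) (hd : Differentiable ℝ f) {L : ℝ} (hL : 0 < L)
    (hlip : ∀ x y, ‖gradient f x - gradient f y‖ ≤ L * ‖x - y‖) (a b : F) :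
    f b ≤ f a + ⟪gradient f a, b - a⟫_ℝ + L / 2 * ‖b - a‖ ^ 2 := by
  set G : ℝ → ℝ := fun s => ⟪gradient f (a + s • (b - a)), b - a⟫_ℝ with hG
  have hgradcont : Continuous (gradient f) := by
    have : LipschitzWith (Real.toNNReal L) (gradient f) := by
      apply LipschitzWith.of_dist_le_mul
      intro x y
      rw [dist_eq_norm, dist_eq_norm]
      exact le_trans (hlip x y) (by
        rw [Real.coe_toNNReal L hL.le])
    exact this.continuous
  have hGcont : Continuous G := by
    apply Continuous.inner
    · exact hgradcont.comp (by continuity)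
    · exact continuous_const
  have hint : ∫ s in (0:ℝ)..1, G s = f b - f a := by
    have := intervalIntegral.integral_eq_sub_of_hasDerivAt
      (f := fun s : ℝ => f (a + s • (b - a))) (f' := G)
      (fun s _ => line_hasDerivAt_s12 f hd a b s)
      (hGcont.intervalIntegrable 0 1)
    simpa using this
  have hmono : ∫ s in (0:ℝ)..1, G s ≤ ∫ s in (0:ℝ)..1, (G 0 + L * s * ‖b - a‖ ^ 2) := by
    apply intervalIntegral.integral_mono_on (by norm_num)
      (hGcont.intervalIntegrable 0 1)
      ((by fun_prop : Continuous fun s : ℝ => G 0 + L * s * ‖b - a‖ ^ 2).intervalIntegrable 0 1)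
    intro s hs
    have hdiff : G s - G 0 = ⟪gradient f (a + s • (b - a)) - gradient f a, b - a⟫_ℝ := by
      simp [hG, inner_sub_left]
    have hb : ⟪gradient f (a + s • (b - a)) - gradient f a, b - a⟫_ℝ ≤ L * s * ‖b - a‖ ^ 2 := by
      have h1 : ‖gradient f (a + s • (b - a)) - gradient f a‖ ≤ L * (s * ‖b - a‖) := by
        have := hlip (a + s • (b - a)) a
        simpa [norm_smul, abs_of_nonneg hs.1, mul_assoc] using this
      calc ⟪gradient f (a + s • (b - a)) - gradient f a, b - a⟫_ℝ
          ≤ ‖gradient f (a + s • (b - a)) - gradient f a‖ * ‖b - a‖ := real_inner_le_norm _ _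
        _ ≤ (L * (s * ‖b - a‖)) * ‖b - a‖ := mul_le_mul_of_nonneg_right h1 (norm_nonneg _)
        _ = L * s * ‖b - a‖ ^ 2 := by ring
    linarith [hdiff ▸ hb]
  have hval : ∫ s in (0:ℝ)..1, (G 0 + L * s * ‖b - a‖ ^ 2)
      = G 0 + L / 2 * ‖b - a‖ ^ 2 := by
    have h1 : (fun s : ℝ => G 0 + L * s * ‖b - a‖ ^ 2)
        = fun s : ℝ => G 0 + (L * ‖b - a‖ ^ 2) * s := by ext s; ring
    have hA : IntervalIntegrable (fun _ : ℝ => G 0) MeasureTheory.volume 0 1 :=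
      intervalIntegrable_const
    have hB : IntervalIntegrable (fun s : ℝ => (L * ‖b - a‖ ^ 2) * s)
        MeasureTheory.volume 0 1 := by
      apply Continuous.intervalIntegrable; fun_prop
    rw [show (∫ s in (0:ℝ)..1, (G 0 + L * s * ‖b - a‖ ^ 2))
        = ∫ s in (0:ℝ)..1, (G 0 + (L * ‖b - a‖ ^ 2) * s) by rw [h1]]
    rw [intervalIntegral.integral_add hA hB, intervalIntegral.integral_const_mul,
      integral_id, intervalIntegral.integral_const]
    norm_num
    ring
  have hG0 : G 0 = ⟪gradient f a, b - a⟫_ℝ := by simp [hG]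
  linarith [hint ▸ hmono, hval]

lemma cocoercive (f : F → ℝ) (hc : ConvexOn ℝ Set.univ f) (hd : Differentiable ℝ f)
    {L : ℝ} (hL : 0 < L)
    (hlip : ∀ x y, ‖gradient f x - gradient f y‖ ≤ L * ‖x - y‖) (a b : F) :
    f a - f b ≤ ⟪gradient f a, a - b⟫_ℝ - 1 / (2 * L) * ‖gradient f b - gradient f a‖ ^ 2 := by
  set c := gradient f a with hcdef
  set φ : F → ℝ := fun z => f z - ⟪c, z⟫_ℝ with hφ
  have hgradφ : ∀ z, HasGradientAt φ (gradient f z - c) z := by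
    intro z
    have h1 : HasFDerivAt f (toDual ℝ F (gradient f z)) z := (hd z).hasGradientAt.hasFDerivAt
    have h2 : HasFDerivAt (fun z : F => ⟪c, z⟫_ℝ) (toDual ℝ F c) z := by
      have := (toDual ℝ F c).hasFDerivAt (x := z)
      exact this
    have := h1.sub h2
    rw [← map_sub] at this
    simpa [hφ, -toDual_gradient, Pi.sub_def] using this.hasGradientAt
  have hφgrad : gradient φ = fun z => gradient f z - c := gradient_eq hgradφ
  have hφdiff : Differentiable ℝ φ := fun z => (hgradφ z).differentiableAt
  have hφconv : ConvexOn ℝ Set.univ φ := by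
    refine ⟨convex_univ, ?_⟩
    intro u _ v _ p q hp hq hpq
    have := hc.2 (mem_univ u) (mem_univ v) hp hq hpq
    simp only [hφ, inner_add_right, inner_smul_right, smul_eq_mul] at *
    linarith
  have hφlip : ∀ x y, ‖gradient φ x - gradient φ y‖ ≤ L * ‖x - y‖ := by
    intro x y
    rw [hφgrad]
    simpa using hlip x y
  -- φ is minimized at a
  have hmin : ∀ z, φ a ≤ φ z := by
    intro z
    have := convex_grad_ineq φ hφconv hφdiff a z
    rw [hφgrad] at this
    simpa [hcdef] using this
  -- descent step at b
  have hstep := descent_lemma φ hφdiff hL hφlip b (b + (-(1 / L)) • gradient φ b)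
  have key : φ a ≤ φ b - 1 / (2 * L) * ‖gradient φ b‖ ^ 2 := by
    have h1 := hmin (b + (-(1 / L)) • gradient φ b)
    have h2 : ⟪gradient φ b, b + (-(1 / L)) • gradient φ b - b⟫_ℝ
        = -(1 / L) * ‖gradient φ b‖ ^ 2 := by
      simp [real_inner_smul_right, real_inner_self_eq_norm_sq, -inner_gradient_left]
    have h3 : ‖b + (-(1 / L)) • gradient φ b - b‖ ^ 2 = (1 / L) ^ 2 * ‖gradient φ b‖ ^ 2 := by
      rw [show b + (-(1 / L)) • gradient φ b - b = (-(1 / L)) • gradient φ b by abel]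
      rw [norm_smul]
      simp [mul_pow]
    rw [h2, h3] at hstep
    have hL' : L ≠ 0 := ne_of_gt hL
    have : L / 2 * ((1 / L) ^ 2 * ‖gradient φ b‖ ^ 2) = 1 / (2 * L) * ‖gradient φ b‖ ^ 2 := by
      field_simp
    rw [this] at hstep
    have : -(1 / L) * ‖gradient φ b‖ ^ 2 + 1 / (2 * L) * ‖gradient φ b‖ ^ 2
        = -(1 / (2 * L) * ‖gradient φ b‖ ^ 2) := by field_simp; ring
    linarith [le_trans h1 hstep]
  rw [hφgrad] at key
  simp only [hφ] at key
  have : ⟪c, a⟫_ℝ - ⟪c, b⟫_ℝ = ⟪c, a - b⟫_ℝ := by rw [inner_sub_right]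
  have hsym : ⟪c, a - b⟫_ℝ = ⟪gradient f a, a - b⟫_ℝ := by rw [hcdef]
  rw [inner_sub_right] at *
  linarith [key]

end Aux

theorem stmt12 (n T : ℕ) (L C : ℝ) (hL : 0 < L) (hC : 0 < C)
    (ℓ : ℕ → EuclideanSpace ℝ (Fin n) → ℝ)
    (hconv : ∀ t, ConvexOn ℝ Set.univ (ℓ t))
    (hdiff : ∀ t, Differentiable ℝ (ℓ t))
    (hsmooth : ∀ t, ∀ x y, ‖gradient (ℓ t) x - gradient (ℓ t) y‖ ≤ L * ‖x - y‖)
    (X : Set (EuclideanSpace ℝ (Fin n)))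
    (x : ℕ → EuclideanSpace ℝ (Fin n))
    (hlin : ∀ y ∈ X,
      ∑ t ∈ Finset.range T, ⟪gradient (ℓ t) (x t), x t - y⟫_ℝ ≤
        C * Real.sqrt (∑ t ∈ Finset.range T, ‖gradient (ℓ t) (x t)‖ ^ 2)) :
    ∀ y ∈ X,
      ∑ t ∈ Finset.range T, (ℓ t (x t) - ℓ t y) ≤
        C * Real.sqrt (∑ t ∈ Finset.range T, ‖gradient (ℓ t) y‖ ^ 2) + L * C ^ 2 / 2 := by
  intro y hy
  set g : ℕ → EuclideanSpace ℝ (Fin n) := fun t => gradient (ℓ t) (x t) with hg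
  set h : ℕ → EuclideanSpace ℝ (Fin n) := fun t => gradient (ℓ t) y with hh
  set Sg : ℝ := ∑ t ∈ Finset.range T, ‖g t‖ ^ 2 with hSg
  set Sh : ℝ := ∑ t ∈ Finset.range T, ‖h t‖ ^ 2 with hSh
  set Sd : ℝ := ∑ t ∈ Finset.range T, ‖h t - g t‖ ^ 2 with hSd
  have hSg0 : 0 ≤ Sg := Finset.sum_nonneg fun t _ => sq_nonneg _
  have hSh0 : 0 ≤ Sh := Finset.sum_nonneg fun t _ => sq_nonneg _
  have hSd0 : 0 ≤ Sd := Finset.sum_nonneg fun t _ => sq_nonneg _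
  set A : ℝ := Real.sqrt Sg with hA
  set B : ℝ := Real.sqrt Sh with hB
  set D : ℝ := Real.sqrt Sd with hD
  have hA2 : A ^ 2 = Sg := Real.sq_sqrt hSg0
  have hB2 : B ^ 2 = Sh := Real.sq_sqrt hSh0
  have hD2 : D ^ 2 = Sd := Real.sq_sqrt hSd0
  have hA0 : 0 ≤ A := Real.sqrt_nonneg _
  have hB0 : 0 ≤ B := Real.sqrt_nonneg _
  have hD0 : 0 ≤ D := Real.sqrt_nonneg _
  -- step 1: sum of cocoercivity
  have hsum : ∑ t ∈ Finset.range T, (ℓ t (x t) - ℓ t y) ≤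
      (∑ t ∈ Finset.range T, ⟪g t, x t - y⟫_ℝ) - 1 / (2 * L) * Sd := by
    have hkey : ∀ t ∈ Finset.range T, ℓ t (x t) - ℓ t y ≤
        ⟪g t, x t - y⟫_ℝ - 1 / (2 * L) * ‖h t - g t‖ ^ 2 := fun t _ =>
      cocoercive (ℓ t) (hconv t) (hdiff t) hL (hsmooth t) (x t) y
    calc ∑ t ∈ Finset.range T, (ℓ t (x t) - ℓ t y)
        ≤ ∑ t ∈ Finset.range T, (⟪g t, x t - y⟫_ℝ - 1 / (2 * L) * ‖h t - g t‖ ^ 2) :=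
          Finset.sum_le_sum hkey
      _ = (∑ t ∈ Finset.range T, ⟪g t, x t - y⟫_ℝ) - 1 / (2 * L) * Sd := by
          rw [Finset.sum_sub_distrib, ← Finset.mul_sum]
  have hlin' : ∑ t ∈ Finset.range T, ⟪g t, x t - y⟫_ℝ ≤ C * A := hlin y hy
  -- step 2: A ≤ B + D
  have hAB : A ≤ B + D := by
    have hCS : ∑ t ∈ Finset.range T, ‖h t‖ * ‖g t - h t‖ ≤ B * D := by
      have h1 := Finset.sum_mul_sq_le_sq_mul_sq (Finset.range T)
        (fun t => ‖h t‖) (fun t => ‖g t - h t‖)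
      have h2 : ∑ t ∈ Finset.range T, ‖g t - h t‖ ^ 2 = Sd := by
        rw [hSd]; exact Finset.sum_congr rfl fun t _ => by rw [norm_sub_rev]
      calc ∑ t ∈ Finset.range T, ‖h t‖ * ‖g t - h t‖
          = Real.sqrt ((∑ t ∈ Finset.range T, ‖h t‖ * ‖g t - h t‖) ^ 2) := by
            rw [Real.sqrt_sq (Finset.sum_nonneg fun t _ =>
              mul_nonneg (norm_nonneg _) (norm_nonneg _))]
        _ ≤ Real.sqrt (Sh * Sd) := Real.sqrt_le_sqrt (by rw [← h2]; exact h1)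
        _ = B * D := by rw [Real.sqrt_mul hSh0]
    have hSgle : Sg ≤ (B + D) ^ 2 := by
      have hpt : ∀ t ∈ Finset.range T, ‖g t‖ ^ 2 ≤
          (‖h t‖ + ‖g t - h t‖) ^ 2 := by
        intro t _
        have : ‖g t‖ ≤ ‖h t‖ + ‖g t - h t‖ := by
          calc ‖g t‖ = ‖h t + (g t - h t)‖ := by congr 1; abel
            _ ≤ ‖h t‖ + ‖g t - h t‖ := norm_add_le _ _
        exact pow_le_pow_left₀ (norm_nonneg _) this 2
      have h2 : ∑ t ∈ Finset.range T, ‖g t - h t‖ ^ 2 = Sd := by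
        rw [hSd]; exact Finset.sum_congr rfl fun t _ => by rw [norm_sub_rev]
      calc Sg ≤ ∑ t ∈ Finset.range T, (‖h t‖ + ‖g t - h t‖) ^ 2 :=
            Finset.sum_le_sum hpt
        _ = Sh + 2 * (∑ t ∈ Finset.range T, ‖h t‖ * ‖g t - h t‖) + Sd := by
            rw [← h2, hSh, Finset.mul_sum, ← Finset.sum_add_distrib,
              ← Finset.sum_add_distrib]
            exact Finset.sum_congr rfl fun t _ => by ring
        _ ≤ Sh + 2 * (B * D) + Sd := by linarith
        _ = (B + D) ^ 2 := by rw [← hB2, ← hD2]; ring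
    calc A = Real.sqrt Sg := rfl
      _ ≤ Real.sqrt ((B + D) ^ 2) := Real.sqrt_le_sqrt hSgle
      _ = B + D := Real.sqrt_sq (by linarith)
  -- final arithmetic
  have hD2' : Sd = D ^ 2 := hD2.symm
  rw [hD2'] at hsum
  have hCA : C * A ≤ C * B + C * D := by nlinarith
  have hfin : C * D - 1 / (2 * L) * D ^ 2 ≤ L * C ^ 2 / 2 := by
    have h1 : 0 ≤ (D - L * C) ^ 2 / (2 * L) := div_nonneg (sq_nonneg _) (by linarith)
    have h2 : L * C ^ 2 / 2 - (C * D - 1 / (2 * L) * D ^ 2) = (D - L * C) ^ 2 / (2 * L) := by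
      field_simp; ring
    linarith
  linarith
end
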